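/- Let F be a k-uniform hypergraph on n vertices, and let x = (x_1,...,x_n) with x_i ≥ 0 for all i and Σ_{i=1}^n x_i = 1 be such that P_F(x) = λ(F), and suppose the support I = {i : x_i ≠ 0} is minimal among supports of such maximizing vectors. Then the induced subhypergraph F[I] is covering, i.e., every pair of distinct vertices of I is contained in some hyperedge of F that is a subset of I. -/

import Mathlib

/-- The polynomial form `P_H(x) = ∑_{e ∈ E} ∏_{i ∈ e} x i` of a hypergraph on `Fin n`. -/
noncomputable def polyForm {n : ℕ} (E : Finset (Finset (Fin n))) (x : Fin n → ℝ) : ℝ :=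
  ∑ e ∈ E, ∏ i ∈ e, x i

/-- If `x` is a maximizer of the polynomial form of a `k`-uniform hypergraph
over the standard simplex whose support is minimal among supports of
maximizers, then the subhypergraph induced on the support of `x` is covering. -/
theorem induced_on_minimal_support_is_covering (n k : ℕ)
    (E : Finset (Finset (Fin n))) (hunif : ∀ e ∈ E, e.card = k)
    (x : Fin n → ℝ) (hx0 : ∀ i, 0 ≤ x i) (hx1 : ∑ i, x i = 1)
    (hmax : ∀ y : Fin n → ℝ, (∀ i, 0 ≤ y i) → ∑ i, y i = 1 →
      polyForm E y ≤ polyForm E x)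
    (hmin : ∀ y : Fin n → ℝ, (∀ i, 0 ≤ y i) → ∑ i, y i = 1 →
      polyForm E y = polyForm E x →
      {i | y i ≠ 0} ⊆ {i | x i ≠ 0} → {i | y i ≠ 0} = {i | x i ≠ 0}) :
    ∀ u v : Fin n, u ≠ v → x u ≠ 0 → x v ≠ 0 →
      ∃ e ∈ E, u ∈ e ∧ v ∈ e ∧ ∀ w ∈ e, x w ≠ 0 := by
  intro u v huv hxu hxv
  by_contra hcon
  push_neg at hcon
  have hxu' : 0 < x u := (hx0 u).lt_of_ne (Ne.symm hxu)
  have hxv' : 0 < x v := (hx0 v).lt_of_ne (Ne.symm hxv)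
  set s : ℝ := x u + x v with hsdef
  have hs' : 0 < s := by positivity
  set y : Fin n → ℝ := Function.update (Function.update x u s) v 0 with hy
  set y' : Fin n → ℝ := Function.update (Function.update x v s) u 0 with hy'
  have hyv : y v = 0 := by simp [hy]
  have hy'u : y' u = 0 := by simp [hy']
  have hyu : y u = s := by
    rw [hy, Function.update_of_ne huv, Function.update_self]
  have hy'v : y' v = s := by
    rw [hy', Function.update_of_ne huv.symm, Function.update_self]
  have hyo : ∀ i, i ≠ u → i ≠ v → y i = x i := by
    intro i hiu hiv
    rw [hy, Function.update_of_ne hiv, Function.update_of_ne hiu]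
  have hy'o : ∀ i, i ≠ u → i ≠ v → y' i = x i := by
    intro i hiu hiv
    rw [hy', Function.update_of_ne hiu, Function.update_of_ne hiv]
  -- sums
  have hysum : ∑ i, y i = 1 := by
    have hptw : ∀ i, y i = x i +
        ((if i = u then x v else 0) - (if i = v then x v else 0)) := by
      intro i
      by_cases hiv : i = v
      · rw [hiv, hyv, if_neg (huv.symm), if_pos rfl]; ring
      · by_cases hiu : i = u
        · rw [hiu, hyu, hsdef, if_pos rfl, if_neg huv]; ring
        · rw [hyo i hiu hiv, if_neg hiu, if_neg hiv]; ring
    rw [Finset.sum_congr rfl (fun i _ => hptw i)]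
    rw [Finset.sum_add_distrib, Finset.sum_sub_distrib, hx1,
      Finset.sum_ite_eq' Finset.univ u (fun _ => x v),
      Finset.sum_ite_eq' Finset.univ v (fun _ => x v)]
    simp
  have hy'sum : ∑ i, y' i = 1 := by
    have hptw : ∀ i, y' i = x i +
        ((if i = v then x u else 0) - (if i = u then x u else 0)) := by
      intro i
      by_cases hiu : i = u
      · rw [hiu, hy'u, if_neg huv, if_pos rfl]; ring
      · by_cases hiv : i = v
        · rw [hiv, hy'v, hsdef, if_pos rfl, if_neg huv.symm]; ring
        · rw [hy'o i hiu hiv, if_neg hiv, if_neg hiu]; ring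
    rw [Finset.sum_congr rfl (fun i _ => hptw i)]
    rw [Finset.sum_add_distrib, Finset.sum_sub_distrib, hx1,
      Finset.sum_ite_eq' Finset.univ v (fun _ => x u),
      Finset.sum_ite_eq' Finset.univ u (fun _ => x u)]
    simp
  have hynn : ∀ i, 0 ≤ y i := by
    intro i
    by_cases hiv : i = v
    · rw [hiv, hyv]
    · by_cases hiu : i = u
      · rw [hiu, hyu]; exact hs'.le
      · rw [hyo i hiu hiv]; exact hx0 i
  have hy'nn : ∀ i, 0 ≤ y' i := by
    intro i
    by_cases hiu : i = u
    · rw [hiu, hy'u]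
    · by_cases hiv : i = v
      · rw [hiv, hy'v]; exact hs'.le
      · rw [hy'o i hiu hiv]; exact hx0 i
  -- key per-edge identity
  have key : ∀ e ∈ E, x u * ∏ i ∈ e, y i + x v * ∏ i ∈ e, y' i = s * ∏ i ∈ e, x i := by
    intro e he
    by_cases hu : u ∈ e <;> by_cases hv : v ∈ e
    · obtain ⟨w, hwe, hw⟩ := hcon e he hu hv
      have hpy : ∏ i ∈ e, y i = 0 := Finset.prod_eq_zero hv hyv
      have hpy' : ∏ i ∈ e, y' i = 0 := Finset.prod_eq_zero hu hy'u
      have hpx : ∏ i ∈ e, x i = 0 := Finset.prod_eq_zero hwe hw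
      rw [hpy, hpy', hpx]; ring
    · have step1 : ∏ i ∈ e, y i = ∏ i ∈ e, Function.update x u s i := by
        refine Finset.prod_congr rfl (fun i hi => ?_)
        have hiv : i ≠ v := fun h => hv (h ▸ hi)
        rw [hy, Function.update_of_ne hiv]
      have hpy : ∏ i ∈ e, y i = s * ∏ i ∈ e.erase u, x i := by
        rw [step1, Finset.prod_update_of_mem hu x s, Finset.sdiff_singleton_eq_erase]
      have hpy' : ∏ i ∈ e, y' i = 0 := Finset.prod_eq_zero hu hy'u
      have hpx : ∏ i ∈ e, x i = x u * ∏ i ∈ e.erase u, x i :=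
        (Finset.mul_prod_erase e x hu).symm
      rw [hpy, hpy', hpx]; ring
    · have step1 : ∏ i ∈ e, y' i = ∏ i ∈ e, Function.update x v s i := by
        refine Finset.prod_congr rfl (fun i hi => ?_)
        have hiu : i ≠ u := fun h => hu (h ▸ hi)
        rw [hy', Function.update_of_ne hiu]
      have hpy' : ∏ i ∈ e, y' i = s * ∏ i ∈ e.erase v, x i := by
        rw [step1, Finset.prod_update_of_mem hv x s, Finset.sdiff_singleton_eq_erase]
      have hpy : ∏ i ∈ e, y i = 0 := Finset.prod_eq_zero hv hyv
      have hpx : ∏ i ∈ e, x i = x v * ∏ i ∈ e.erase v, x i :=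
        (Finset.mul_prod_erase e x hv).symm
      rw [hpy, hpy', hpx]; ring
    · have hpy : ∏ i ∈ e, y i = ∏ i ∈ e, x i :=
        Finset.prod_congr rfl (fun i hi =>
          hyo i (fun h => hu (h ▸ hi)) (fun h => hv (h ▸ hi)))
      have hpy' : ∏ i ∈ e, y' i = ∏ i ∈ e, x i :=
        Finset.prod_congr rfl (fun i hi =>
          hy'o i (fun h => hu (h ▸ hi)) (fun h => hv (h ▸ hi)))
      rw [hpy, hpy']; ring
  have hkey : x u * polyForm E y + x v * polyForm E y' =
      x u * polyForm E x + x v * polyForm E x := by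
    have : x u * polyForm E y + x v * polyForm E y' = s * polyForm E x := by
      unfold polyForm
      rw [Finset.mul_sum, Finset.mul_sum, Finset.mul_sum, ← Finset.sum_add_distrib]
      exact Finset.sum_congr rfl key
    rw [this, hsdef]; ring
  have h1 : polyForm E y ≤ polyForm E x := hmax y hynn hysum
  have h2 : polyForm E y' ≤ polyForm E x := hmax y' hy'nn hy'sum
  have h3 : x v * polyForm E y' ≤ x v * polyForm E x :=
    mul_le_mul_of_nonneg_left h2 hxv'.le
  have h4 : x u * polyForm E x ≤ x u * polyForm E y := by linarith
  have hPy : polyForm E y = polyForm E x :=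
    le_antisymm h1 ((mul_le_mul_iff_right₀ hxu').mp h4)
  have hsub : {i | y i ≠ 0} ⊆ {i | x i ≠ 0} := by
    intro i hi
    simp only [Set.mem_setOf_eq] at hi ⊢
    by_cases hiv : i = v
    · rw [hiv, hyv] at hi; exact absurd rfl hi
    · by_cases hiu : i = u
      · rw [hiu]; exact hxu
      · rw [hyo i hiu hiv] at hi; exact hi
  have heq := hmin y hynn hysum hPy hsub
  have hv : v ∈ {i | y i ≠ 0} := heq ▸ (show v ∈ {i | x i ≠ 0} from hxv)
  exact hv hyv
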